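/- arXiv:2304.06318 — 2 statements merged into one kernel-verified Lean document; each statement's English description precedes it below -/
import Mathlib

section
/- Let G be a finite connected graph with set of blocks 𝓑 and let (𝓘, α) be an independent blocks inequality. Then ∑_{B∈𝓑} α_B x_B ≤ 1 holds for every x ∈ CBP(G); that is, every independent blocks inequality is a valid inequality for CBP(G). -/
open Set

noncomputable section

namespace ConnectedBlocksPaper

variable {V : Type} [Fintype V] [DecidableEq V]

/-- A subgraph is 2-connected: at least 3 vertices and removing any vertex keeps it connected. -/
def IsTwoConnectedSub (G : SimpleGraph V) (H : G.Subgraph) : Prop :=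
  3 ≤ H.verts.ncard ∧ ∀ v ∈ H.verts, (H.deleteVerts {v}).Connected

/-- A block of `G`: a maximal 2-connected subgraph, or a bridge together with its two
incident vertices. -/
def IsBlock (G : SimpleGraph V) (B : G.Subgraph) : Prop :=
  (IsTwoConnectedSub G B ∧ ∀ B' : G.Subgraph, IsTwoConnectedSub G B' → B ≤ B' → B' = B)
  ∨ (∃ (u v : V) (h : G.Adj u v), G.IsBridge s(u, v) ∧ B = G.subgraphOfAdj h)

/-- The set `𝓑` of blocks of `G`, as a type. -/
abbrev Block (G : SimpleGraph V) := {B : G.Subgraph // IsBlock G B}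

/-- The subgraph `G[𝓐]` induced by a set of blocks. -/
def blockUnion (G : SimpleGraph V) (𝓐 : Set (Block G)) : G.Subgraph :=
  ⨆ B ∈ 𝓐, (B : G.Subgraph)

/-- `G[𝓐]` is connected (the empty set of blocks counts as connected). -/
def ConnBlocks (G : SimpleGraph V) (𝓐 : Set (Block G)) : Prop :=
  𝓐 = ∅ ∨ (blockUnion G 𝓐).Connected

/-- The incidence vector `χ^𝓐 ∈ {0,1}^𝓑` of a set of blocks `𝓐 ⊆ 𝓑`. -/
def incVec (G : SimpleGraph V) (𝓐 : Set (Block G)) : Block G → ℝ :=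
  Set.indicator 𝓐 1

/-- The connected blocks polytope `CBP(G) ⊆ ℝ^𝓑`. -/
def CBP (G : SimpleGraph V) : Set (Block G → ℝ) :=
  convexHull ℝ {x | ∃ 𝓐 : Set (Block G), ConnBlocks G 𝓐 ∧ x = incVec G 𝓐}

/-- `F` is a face of the convex set `P`. -/
def IsFaceOf {E : Type*} [AddCommGroup E] [Module ℝ E] (P F : Set E) : Prop :=
  F ⊆ P ∧ Convex ℝ F ∧
    ∀ x ∈ P, ∀ y ∈ P, ∀ t : ℝ, 0 < t → t < 1 →
      t • x + (1 - t) • y ∈ F → x ∈ F ∧ y ∈ F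

/-- The dimension of a polytope: the dimension of its affine hull. -/
def polyDim {E : Type*} [AddCommGroup E] [Module ℝ E] (P : Set E) : ℕ :=
  Module.finrank ℝ (affineSpan ℝ P).direction

/-- A facet is a face of dimension `dim P - 1`. -/
def IsFacetOf {E : Type*} [AddCommGroup E] [Module ℝ E] (P F : Set E) : Prop :=
  IsFaceOf P F ∧ polyDim F = polyDim P - 1

/-- `v` is a cut vertex of `G`: deleting `v` from the connected graph `G` leaves more than
one component. -/
def IsCutVertex (G : SimpleGraph V) (v : V) : Prop :=
  ¬ (G.induce ({v}ᶜ : Set V)).Preconnected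

/-- `𝓑⟨𝓐⟩`: the smallest set of blocks inducing a connected subgraph and containing `𝓐`. -/
def blockClosure (G : SimpleGraph V) (𝓐 : Set (Block G)) : Set (Block G) :=
  ⋂₀ {𝓒 : Set (Block G) | 𝓐 ⊆ 𝓒 ∧ ConnBlocks G 𝓒}

/-- An independent set of blocks: no two blocks share a common vertex. -/
def IndepBlocks (G : SimpleGraph V) (𝓘 : Set (Block G)) : Prop :=
  ∀ B₁ ∈ 𝓘, ∀ B₂ ∈ 𝓘, B₁ ≠ B₂ →
    ((B₁ : G.Subgraph).verts ∩ (B₂ : G.Subgraph).verts) = ∅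

/-- `(𝓘, α)` is an independent blocks inequality. -/
def IsIBI (G : SimpleGraph V) (𝓘 : Set (Block G)) (α : Block G → ℤ) : Prop :=
  IndepBlocks G 𝓘 ∧
  (∀ B, B ∉ blockClosure G 𝓘 → α B = 0) ∧
  (∀ B ∈ 𝓘, α B = 1) ∧
  (∀ B ∈ blockClosure G 𝓘 \ 𝓘, α B ≤ 0) ∧
  (∑ᶠ B ∈ blockClosure G 𝓘 \ 𝓘, α B = -((𝓘.ncard : ℤ) - 1)) ∧
  (∀ I ⊆ 𝓘, ∑ᶠ B ∈ blockClosure G I \ 𝓘, α B ≤ -((I.ncard : ℤ) - 1))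

/-- `𝓑[H]`: the set of blocks (of `G`) of the subgraph `H`. -/
def blocksOf (G : SimpleGraph V) (H : G.Subgraph) : Set (Block G) :=
  {B : Block G | (B : G.Subgraph) ≤ H}

/-- `𝒦_v`: the components of `G - v` with `v` (and its incident edges) added back. -/
def Kv (G : SimpleGraph V) (v : V) : Set G.Subgraph :=
  {H | ∃ C : (G.induce ({v}ᶜ : Set V)).ConnectedComponent,
        H = (⊤ : G.Subgraph).induce (Subtype.val '' C.supp ∪ {v})}

/-- A polytope is simple if every vertex lies in exactly `dim P` facets. -/
def IsSimplePolytope {E : Type*} [AddCommGroup E] [Module ℝ E] (P : Set E) : Prop :=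
  ∀ x ∈ P.extremePoints ℝ, {F : Set E | IsFacetOf P F ∧ x ∈ F}.ncard = polyDim P

/-- A simplex: the convex hull of an affinely independent finite set. -/
def IsSimplex {E : Type*} [AddCommGroup E] [Module ℝ E] (F : Set E) : Prop :=
  ∃ s : Finset E, AffineIndependent ℝ ((↑) : s → E) ∧ F = convexHull ℝ (s : Set E)

/-- A polytope is simplicial if every facet is a simplex. -/
def IsSimplicialPolytope {E : Type*} [AddCommGroup E] [Module ℝ E] (P : Set E) : Prop :=
  ∀ F : Set E, IsFacetOf P F → IsSimplex F

/-- The graph of a polytope: extreme points, adjacent when they span a 1-dimensional face. -/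
def polyGraph {E : Type*} [AddCommGroup E] [Module ℝ E] (P : Set E) : SimpleGraph E where
  Adj x y := x ≠ y ∧ x ∈ P.extremePoints ℝ ∧ y ∈ P.extremePoints ℝ ∧
    IsFaceOf P (segment ℝ x y) ∧ polyDim (segment ℝ x y) = 1
  symm := ⟨by
    rintro x y ⟨hxy, hx, hy, hF, hd⟩
    exact ⟨hxy.symm, hy, hx, by rwa [segment_symm], by rwa [segment_symm]⟩⟩
  loopless := ⟨by rintro x ⟨h, -⟩; exact h rfl⟩

instance subgraphFinite (G : SimpleGraph V) : Finite G.Subgraph :=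
  Finite.of_injective (fun H => (H.verts, H.Adj)) (by rintro ⟨⟩ ⟨⟩ h; simp_all)

lemma blockClosure_subset {G : SimpleGraph V} {I 𝓐 : Set (Block G)}
    (hI : I ⊆ 𝓐) (hA : ConnBlocks G 𝓐) : blockClosure G I ⊆ 𝓐 :=
  sInter_subset_of_mem ⟨hI, hA⟩

lemma ibi_key {G : SimpleGraph V} {𝓘 : Set (Block G)} {α : Block G → ℤ}
    (h : IsIBI G 𝓘 α) {𝓐 : Set (Block G)} (hA : ConnBlocks G 𝓐) :
    ∑ᶠ B ∈ 𝓐, α B ≤ 1 := by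
  classical
  letI : Fintype (Block G) := Fintype.ofFinite _
  obtain ⟨-, hzero, hone, hnonpos, -, hsub⟩ := h
  have hclos : blockClosure G (𝓘 ∩ 𝓐) ⊆ 𝓐 :=
    blockClosure_subset Set.inter_subset_right hA
  have hkey := hsub (𝓘 ∩ 𝓐) Set.inter_subset_left
  have e1 : ∑ᶠ B ∈ 𝓐, α B = ∑ B ∈ 𝓐.toFinset, α B := by
    exact finsum_mem_eq_toFinset_sum α 𝓐
  have e2 : ∑ᶠ B ∈ blockClosure G (𝓘 ∩ 𝓐) \ 𝓘, α B
      = ∑ B ∈ (blockClosure G (𝓘 ∩ 𝓐) \ 𝓘).toFinset, α B := by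
    exact finsum_mem_eq_toFinset_sum α _
  rw [e1]
  rw [e2] at hkey
  have hsplit : ∑ B ∈ 𝓐.toFinset, α B
      = ∑ B ∈ 𝓐.toFinset ∩ 𝓘.toFinset, α B + ∑ B ∈ 𝓐.toFinset \ 𝓘.toFinset, α B := by
    rw [Finset.sum_inter_add_sum_sdiff]
  have hsum1 : ∑ B ∈ 𝓐.toFinset ∩ 𝓘.toFinset, α B
      = ((𝓐.toFinset ∩ 𝓘.toFinset).card : ℤ) := by
    rw [Finset.card_eq_sum_ones, Nat.cast_sum]
    refine Finset.sum_congr rfl fun B hB => ?_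
    have : B ∈ 𝓘 := by
      rw [← Set.mem_toFinset]; exact (Finset.mem_inter.mp hB).2
    simp [hone B this]
  have hTsub : (blockClosure G (𝓘 ∩ 𝓐) \ 𝓘).toFinset ⊆ 𝓐.toFinset \ 𝓘.toFinset := by
    intro B hB
    rw [Set.mem_toFinset, Set.mem_diff] at hB
    rw [Finset.mem_sdiff, Set.mem_toFinset, Set.mem_toFinset]
    exact ⟨hclos hB.1, hB.2⟩
  have hsum2 : ∑ B ∈ 𝓐.toFinset \ 𝓘.toFinset, α B
      ≤ ∑ B ∈ (blockClosure G (𝓘 ∩ 𝓐) \ 𝓘).toFinset, α B := by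
    rw [← Finset.sum_sdiff hTsub]
    have hle : ∑ B ∈ (𝓐.toFinset \ 𝓘.toFinset) \ (blockClosure G (𝓘 ∩ 𝓐) \ 𝓘).toFinset,
        α B ≤ 0 := by
      refine Finset.sum_nonpos fun B hB => ?_
      have hBI : B ∉ 𝓘 := by
        have := (Finset.mem_sdiff.mp (Finset.mem_sdiff.mp hB).1).2
        rwa [Set.mem_toFinset] at this
      by_cases hc : B ∈ blockClosure G 𝓘
      · exact hnonpos B ⟨hc, hBI⟩
      · exact le_of_eq (hzero B hc)
    linarith
  have hcard : ((𝓘 ∩ 𝓐).ncard : ℤ) = ((𝓐.toFinset ∩ 𝓘.toFinset).card : ℤ) := by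
    rw [Set.ncard_eq_toFinset_card']
    congr 1
    rw [Set.toFinset_inter, Finset.inter_comm]
  rw [hcard] at hkey
  omega

/-- every independent blocks inequality is valid on `CBP(G)`. -/
theorem ibi_valid (G : SimpleGraph V) (hG : G.Connected)
    (𝓘 : Set (Block G)) (α : Block G → ℤ) (h : IsIBI G 𝓘 α) :
    ∀ x ∈ CBP G, ∑ᶠ B : Block G, (α B : ℝ) * x B ≤ 1 := by
  classical
  letI : Fintype (Block G) := Fintype.ofFinite _
  intro x hx
  rw [finsum_eq_sum_of_fintype]
  set L : (Block G → ℝ) → ℝ := fun y => ∑ B : Block G, (α B : ℝ) * y B with hL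
  have hlin : IsLinearMap ℝ L := by
    constructor
    · intro a b
      simp only [hL, Pi.add_apply, mul_add, Finset.sum_add_distrib]
    · intro c a
      simp only [hL, Pi.smul_apply, smul_eq_mul, Finset.mul_sum]
      exact Finset.sum_congr rfl fun B _ => by ring
  have hconv : Convex ℝ {w : Block G → ℝ | L w ≤ 1} := convex_halfSpace_le hlin 1
  have hsubset : CBP G ⊆ {w | L w ≤ 1} := by
    refine convexHull_min ?_ hconv
    rintro y ⟨𝓐, hA, rfl⟩
    have hkey : ∑ᶠ B ∈ 𝓐, α B ≤ 1 := ibi_key h hA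
    have e1 : ∑ᶠ B ∈ 𝓐, α B = ∑ B ∈ 𝓐.toFinset, α B := by
      exact finsum_mem_eq_toFinset_sum α 𝓐
    have e2 : L (incVec G 𝓐) = ((∑ B ∈ 𝓐.toFinset, α B : ℤ) : ℝ) := by
      rw [hL]
      push_cast
      rw [← Finset.sum_subset (Finset.subset_univ 𝓐.toFinset) (fun B _ hB => by
        rw [Set.mem_toFinset] at hB
        simp [incVec, Set.indicator_of_notMem hB])]
      refine Finset.sum_congr rfl fun B hB => ?_
      rw [Set.mem_toFinset] at hB
      simp [incVec, Set.indicator_of_mem hB]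
    show L (incVec G 𝓐) ≤ 1
    rw [e2]
    rw [e1] at hkey
    exact_mod_cast hkey
  exact hsubset hx

end ConnectedBlocksPaper
end
end

section
/- Let G be a finite connected graph with set of blocks 𝓑, and let ∅ ≠ 𝓐 ⊆ 𝓑 be such that G[𝓐] is connected. Then {0, χ^𝓐} is an edge (a 1-dimensional face) of CBP(G) if and only if |𝓐| = 1. -/
open Set

noncomputable section

namespace ConnectedBlocksPaper

variable {V : Type} [Fintype V] [DecidableEq V]

instance (G : SimpleGraph V) : Finite G.Subgraph :=
  Finite.of_injective (fun H => (H.verts, H.Adj)) fun _ _ h =>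
    SimpleGraph.Subgraph.ext (congrArg Prod.fst h) (congrArg Prod.snd h)

lemma block_connected (G : SimpleGraph V) (B : G.Subgraph) (hB : IsBlock G B) :
    B.Connected := by
  rcases hB with ⟨⟨h3, hdel⟩, -⟩ | ⟨u, v, h, -, rfl⟩
  · rw [SimpleGraph.Subgraph.connected_iff]
    refine ⟨⟨?_⟩, ?_⟩
    · rintro ⟨u, hu⟩ ⟨w, hw⟩
      by_cases huw : u = w
      · subst huw; rfl
      · have hns : ¬ B.verts ⊆ {u, w} := by
          intro hsub
          have h2 : B.verts.ncard ≤ ({u, w} : Set V).ncard :=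
            Set.ncard_le_ncard hsub (Set.toFinite _)
          have h3' : ({u, w} : Set V).ncard ≤ 2 := by
            calc ({u, w} : Set V).ncard ≤ ({w} : Set V).ncard + 1 := Set.ncard_insert_le _ _
            _ = 2 := by rw [Set.ncard_singleton]
          omega
        obtain ⟨x, hx, hxuw⟩ := Set.not_subset.mp hns
        have hxu : x ≠ u := fun e => hxuw (by simp [e])
        have hxw : x ≠ w := fun e => hxuw (by simp [e])
        have hC := hdel x hx
        have hu' : u ∈ (B.deleteVerts {x}).verts := by
          rw [SimpleGraph.Subgraph.deleteVerts_verts]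
          exact ⟨hu, by simp [Ne.symm hxu]⟩
        have hw' : w ∈ (B.deleteVerts {x}).verts := by
          rw [SimpleGraph.Subgraph.deleteVerts_verts]
          exact ⟨hw, by simp [Ne.symm hxw]⟩
        have hr := hC.preconnected ⟨u, hu'⟩ ⟨w, hw'⟩
        have := hr.map (SimpleGraph.Subgraph.inclusion
          (SimpleGraph.Subgraph.deleteVerts_le (s := {x})))
        convert this using 2 <;> rfl
    · have : B.verts.ncard ≠ 0 := by omega
      exact Set.nonempty_of_ncard_ne_zero this
  · exact SimpleGraph.Subgraph.subgraphOfAdj_connected h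

lemma singleton_mem_cbp (G : SimpleGraph V) (B : Block G) :
    incVec G {B} ∈ CBP G := by
  refine subset_convexHull ℝ _ ⟨{B}, Or.inr ?_, rfl⟩
  have : blockUnion G ({B} : Set (Block G)) = (B : G.Subgraph) := by
    simp [blockUnion]
  rw [this]
  exact block_connected G B B.2

lemma zero_mem_cbp (G : SimpleGraph V) : (0 : Block G → ℝ) ∈ CBP G :=
  subset_convexHull ℝ _ ⟨∅, Or.inl rfl, by funext B; simp [incVec]⟩

lemma cbp_bounds (G : SimpleGraph V) {z : Block G → ℝ} (hz : z ∈ CBP G) (B : Block G) :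
    z B ∈ Set.Icc (0 : ℝ) 1 := by
  have hsub : CBP G ⊆ Set.univ.pi (fun _ : Block G => Set.Icc (0:ℝ) 1) := by
    apply convexHull_min
    · rintro x ⟨𝓐, -, rfl⟩ B' -
      by_cases hB' : B' ∈ 𝓐
      · simp [incVec, Set.indicator_of_mem hB']
      · simp [incVec, Set.indicator_of_notMem hB']
    · exact convex_pi fun _ _ => convex_Icc 0 1
  exact hsub hz B (Set.mem_univ B)

lemma incVec_sum (G : SimpleGraph V) (𝓐 : Set (Block G)) (hfin : 𝓐.Finite) :
    incVec G 𝓐 = ∑ B ∈ hfin.toFinset, incVec G {B} := by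
  funext B'
  rw [Finset.sum_apply]
  by_cases hB' : B' ∈ 𝓐
  · rw [incVec, Set.indicator_of_mem hB']
    rw [Finset.sum_eq_single B']
    · simp [incVec]
    · intro b _ hb
      simp [incVec, Set.indicator_of_notMem (by simp [Ne.symm hb] : B' ∉ ({b} : Set (Block G)))]
    · intro hB'2
      exact absurd (hfin.mem_toFinset.mpr hB') hB'2
  · rw [incVec, Set.indicator_of_notMem hB']
    symm
    apply Finset.sum_eq_zero
    intro b hb
    have : B' ∉ ({b} : Set (Block G)) := by
      simp only [Set.mem_singleton_iff]
      rintro rfl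
      exact hB' (hfin.mem_toFinset.mp hb)
    simp [incVec, Set.indicator_of_notMem this]

/-- for `∅ ≠ 𝓐 ⊆ 𝓑` with `G[𝓐]` connected, `{0, χ^𝓐}` is an edge of
`CBP(G)` iff `|𝓐| = 1`. -/
theorem cbp_edge_origin_iff (G : SimpleGraph V) (hG : G.Connected)
    (𝓐 : Set (Block G)) (hne : 𝓐 ≠ ∅) (hc : ConnBlocks G 𝓐) :
    (IsFaceOf (CBP G) (segment ℝ 0 (incVec G 𝓐)) ∧
        polyDim (segment ℝ 0 (incVec G 𝓐)) = 1) ↔ 𝓐.ncard = 1 := by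
  constructor
  · rintro ⟨hF, -⟩
    by_contra hn1
    classical
    have hfin : 𝓐.Finite := Set.toFinite 𝓐
    have hnne : 𝓐.Nonempty := Set.nonempty_iff_ne_empty.mpr hne
    have hge1 : 0 < 𝓐.ncard := Set.ncard_pos hfin |>.mpr hnne
    have hge2 : 2 ≤ 𝓐.ncard := by omega
    obtain ⟨B₁, hB₁, B₂, hB₂, hB12⟩ := (Set.one_lt_ncard hfin).mp (by omega)
    set s := hfin.toFinset with hs
    have hcard : s.card = 𝓐.ncard := (Set.ncard_eq_toFinset_card _ hfin).symm
    have hB₁s : B₁ ∈ s := hfin.mem_toFinset.mpr hB₁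
    set n : ℝ := (s.card : ℝ) with hn
    have hn2 : (2 : ℝ) ≤ n := by rw [hn]; exact_mod_cast (by omega : 2 ≤ s.card)
    have hn0 : n ≠ 0 := by linarith
    have hn1' : n - 1 ≠ 0 := by linarith
    set c : ℝ := n⁻¹ with hcdef
    have hc0 : 0 < c := by positivity
    have hc1 : c < 1 := by
      rw [hcdef]
      rw [inv_lt_one_iff₀]; right; linarith
    set x : Block G → ℝ := incVec G {B₁} with hxdef
    set y : Block G → ℝ := ∑ B ∈ s.erase B₁, (n - 1)⁻¹ • incVec G {B} with hydef
    have hxmem : x ∈ CBP G := singleton_mem_cbp G B₁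
    have hymem : y ∈ CBP G := by
      rw [hydef]
      apply Convex.sum_mem (convex_convexHull ℝ _)
      · intro i _
        have : (0:ℝ) < n - 1 := by linarith
        positivity
      · rw [Finset.sum_const, Finset.card_erase_of_mem hB₁s, nsmul_eq_mul]
        rw [mul_inv_eq_one₀ hn1']
        rw [hn]
        push_cast [Nat.cast_sub (by omega : 1 ≤ s.card)]
        ring
      · intro i _; exact singleton_mem_cbp G i
    have key : c • x + (1 - c) • y = c • incVec G 𝓐 := by
      rw [hydef, Finset.smul_sum]
      have hterm : ∀ B ∈ s.erase B₁,
          (1 - c) • ((n - 1)⁻¹ • incVec G {B}) = c • incVec G ({B} : Set (Block G)) := by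
        intro B _
        rw [smul_smul]
        congr 1
        rw [hcdef]
        field_simp
      rw [Finset.sum_congr rfl hterm, incVec_sum G 𝓐 hfin, Finset.smul_sum, ← hs]
      rw [← Finset.add_sum_erase s (fun B => c • incVec G ({B} : Set (Block G))) hB₁s]
    have hpseg : c • incVec G 𝓐 ∈ segment ℝ 0 (incVec G 𝓐) := by
      exact ⟨1 - c, c, by linarith, le_of_lt hc0, by ring, by simp⟩
    have hxseg := (hF.2.2 x hxmem y hymem c hc0 hc1 (key ▸ hpseg)).1
    obtain ⟨a, b, ha, hb, hab, habx⟩ := hxseg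
    have habx' : b • incVec G 𝓐 = x := by rw [← habx]; simp
    have h1 := congrFun habx' B₁
    have h2 := congrFun habx' B₂
    simp only [Pi.smul_apply, smul_eq_mul, hxdef] at h1 h2
    rw [incVec, incVec, Set.indicator_of_mem hB₁, Set.indicator_of_mem (Set.mem_singleton B₁)]
      at h1
    rw [incVec, incVec, Set.indicator_of_mem hB₂,
      Set.indicator_of_notMem (by simp [Ne.symm hB12] : B₂ ∉ ({B₁} : Set (Block G)))] at h2
    simp at h1 h2
    rw [h2] at h1
    norm_num at h1
  · intro h1
    obtain ⟨B₀, hB₀⟩ := Set.ncard_eq_one.mp h1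
    subst hB₀
    set e : Block G → ℝ := incVec G {B₀} with hedef
    have heB₀ : e B₀ = 1 := by
      simp [hedef, incVec, Set.indicator_of_mem (Set.mem_singleton B₀)]
    have heB : ∀ B, B ≠ B₀ → e B = 0 := by
      intro B hB
      simp [hedef, incVec, Set.indicator_of_notMem (by simp [hB] : B ∉ ({B₀} : Set (Block G)))]
    have hemem : e ∈ CBP G := subset_convexHull ℝ _ ⟨{B₀}, hc, rfl⟩
    have hchar : ∀ z ∈ CBP G, (∀ B, B ≠ B₀ → z B = 0) → z ∈ segment ℝ 0 e := by
      intro z hz h0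
      have hb := cbp_bounds G hz B₀
      refine ⟨1 - z B₀, z B₀, by linarith [hb.2], hb.1, by ring, ?_⟩
      funext B
      by_cases hB : B = B₀
      · subst hB; simp [heB₀]
      · simp [h0 B hB, heB B hB]
    constructor
    · refine ⟨?_, convex_segment 0 e, ?_⟩
      · exact (convex_convexHull ℝ _).segment_subset (zero_mem_cbp G) hemem
      · intro p hp q hq t ht0 ht1 hmem
        obtain ⟨a, b, -, -, -, habm⟩ := hmem
        have hzero : ∀ B, B ≠ B₀ → t * p B + (1 - t) * q B = 0 := by
          intro B hB
          have := congrFun habm B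
          simp only [Pi.add_apply, Pi.smul_apply, smul_eq_mul, smul_zero, Pi.zero_apply] at this
          rw [heB B hB] at this
          simpa using this.symm
        have hcoords : ∀ B, B ≠ B₀ → p B = 0 ∧ q B = 0 := by
          intro B hB
          have hp0 := (cbp_bounds G hp B).1
          have hq0 := (cbp_bounds G hq B).1
          have h := hzero B hB
          constructor
          · nlinarith
          · nlinarith
        exact ⟨hchar p hp (fun B hB => (hcoords B hB).1),
               hchar q hq (fun B hB => (hcoords B hB).2)⟩
    · have he0 : e ≠ 0 := by
        intro h
        have := congrFun h B₀
        rw [heB₀] at this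
        simp at this
      rw [polyDim, ← convexHull_pair, affineSpan_convexHull, direction_affineSpan,
        vectorSpan_pair]
      have h0e : (0 : Block G → ℝ) -ᵥ e = -e := by simp
      rw [h0e]
      exact finrank_span_singleton (neg_ne_zero.mpr he0)


end ConnectedBlocksPaper
end
end
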